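/- Let (X,φ) be a minimal Cantor system. Then the topological full group 𝔗(φ) is a LEF group: for every finite subset F ⊆ 𝔗(φ) there exist a finite group H and a map α : 𝔗(φ) → H such that α(γ₁γ₂) = α(γ₁)α(γ₂) for all γ₁, γ₂ ∈ F, and the restriction of α to F is injective. -/

import Mathlib

/-- The group of self-homeomorphisms of a topological space, under composition. -/
instance homeoGroup {X : Type*} [TopologicalSpace X] : Group (X ≃ₜ X) where
  mul a b := b.trans a
  one := Homeomorph.refl X
  inv := Homeomorph.symm
  mul_assoc a b c := rfl
  one_mul a := Homeomorph.ext fun _ => rfl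
  mul_one a := Homeomorph.ext fun _ => rfl
  inv_mul_cancel a := Homeomorph.ext fun x => a.symm_apply_apply x

@[simp] lemma homeo_mul_apply {X : Type*} [TopologicalSpace X] (f g : X ≃ₜ X) (x : X) :
    (f * g) x = f (g x) := rfl

@[simp] lemma homeo_one_apply {X : Type*} [TopologicalSpace X] (x : X) :
    (1 : X ≃ₜ X) x = x := rfl

lemma homeo_zpow_add_apply {X : Type*} [TopologicalSpace X] (φ : X ≃ₜ X) (a b : ℤ) (x : X) :
    (φ ^ (a + b)) x = (φ ^ a) ((φ ^ b) x) := by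
  rw [zpow_add]; rfl

/-- A *Cantor space* is a topological space homeomorphic to `{0,1}^ℕ`. -/
def IsCantorSpace (X : Type*) [TopologicalSpace X] : Prop :=
  Nonempty (X ≃ₜ (ℕ → Bool))

/-- A homeomorphism is *minimal* if every `ℤ`-orbit `{φ^n x : n ∈ ℤ}` is dense. -/
def IsMinimalHomeo {X : Type*} [TopologicalSpace X] (φ : X ≃ₜ X) : Prop :=
  ∀ x : X, Dense (Set.range fun n : ℤ => (φ ^ n) x)

/-- The topological full group of a homeomorphism `φ`: all homeomorphisms `γ` admitting a
continuous orbit cocycle `f : X → ℤ` with `γ x = φ ^ (f x) x` for all `x`. -/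
def topFullGroup {X : Type*} [TopologicalSpace X] (φ : X ≃ₜ X) : Subgroup (X ≃ₜ X) where
  carrier := {γ | ∃ f : X → ℤ, Continuous f ∧ ∀ x, γ x = (φ ^ f x) x}
  one_mem' := ⟨fun _ => 0, continuous_const, fun x => by simp⟩
  mul_mem' := by
    rintro γ₁ γ₂ ⟨f₁, hf₁, h₁⟩ ⟨f₂, hf₂, h₂⟩
    refine ⟨fun x => f₁ (γ₂ x) + f₂ x, (hf₁.comp γ₂.continuous).add hf₂, fun x => ?_⟩
    rw [homeo_mul_apply, homeo_zpow_add_apply, ← h₂ x, ← h₁ (γ₂ x)]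
  inv_mem' := by
    rintro γ ⟨f, hf, h⟩
    refine ⟨fun x => -(f (γ⁻¹ x)), (hf.comp (γ⁻¹ : X ≃ₜ X).continuous).neg, fun x => ?_⟩
    have h1 : γ (γ⁻¹ x) = (φ ^ f (γ⁻¹ x)) (γ⁻¹ x) := h (γ⁻¹ x)
    have h2 : γ (γ⁻¹ x) = x := γ.apply_symm_apply x
    have h3 := h1.symm.trans h2
    calc γ⁻¹ x = (φ ^ (-(f (γ⁻¹ x)) + f (γ⁻¹ x))) (γ⁻¹ x) := by simp
    _ = (φ ^ (-(f (γ⁻¹ x)))) ((φ ^ (f (γ⁻¹ x))) (γ⁻¹ x)) := homeo_zpow_add_apply ..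
    _ = (φ ^ (-(f (γ⁻¹ x)))) x := by rw [h3]

open Pointwise

lemma homeo_inv_apply {X : Type*} [TopologicalSpace X] (φ : X ≃ₜ X) (y : X) :
    (φ⁻¹ : X ≃ₜ X) y = φ.symm y := rfl

lemma homeo_zpow_zero_apply {X : Type*} [TopologicalSpace X] (φ : X ≃ₜ X) (y : X) :
    (φ ^ (0:ℤ)) y = y := by rw [zpow_zero]; rfl

-- multiples of a period fix the point
lemma period_mul {X : Type*} [TopologicalSpace X] (φ : X ≃ₜ X) (w : X) {d : ℤ}
    (hd : (φ ^ d) w = w) : ∀ q : ℤ, (φ ^ (d * q)) w = w := by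
  have hneg : (φ ^ (-d)) w = w := by
    conv_lhs => rw [← hd]
    rw [← homeo_zpow_add_apply, neg_add_cancel, homeo_zpow_zero_apply]
  intro q
  induction q using Int.induction_on with
  | zero => simpa using homeo_zpow_zero_apply φ w
  | succ k ih =>
      have : d * (k + 1) = d + d * k := by ring
      rw [this, homeo_zpow_add_apply, ih, hd]
  | pred k ih =>
      have : d * (-k - 1) = -d + d * (-k) := by ring
      rw [this, homeo_zpow_add_apply, ih, hneg]

lemma aperiodic_of_minimal {X : Type*} [TopologicalSpace X] [T1Space X] [Infinite X]
    (φ : X ≃ₜ X) (hmin : IsMinimalHomeo φ) (y : X) {k j : ℤ}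
    (h : (φ ^ k) y = (φ ^ j) y) : k = j := by
  by_contra hne
  set w := (φ ^ j) y with hw
  have hper : (φ ^ (k - j)) w = w := by
    rw [hw, ← homeo_zpow_add_apply, sub_add_cancel, h]
  set d : ℤ := k - j with hdd
  have hd0 : d ≠ 0 := sub_ne_zero.mpr hne
  have habs : (φ ^ |d|) w = w := by
    rcases abs_choice d with h1 | h1
    · rw [h1]; exact hper
    · rw [h1]
      have := period_mul φ w hper (-1)
      simpa using this
  have habspos : 0 < |d| := abs_pos.mpr hd0
  have hmulabs : ∀ q : ℤ, (φ ^ (|d| * q)) w = w := period_mul φ w habs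
  have hsub : (Set.range fun n : ℤ => (φ ^ n) w) ⊆
      (fun r : ℤ => (φ ^ r) w) '' (Set.Icc 0 (|d| - 1)) := by
    rintro _ ⟨n, rfl⟩
    refine ⟨n % |d|, ⟨Int.emod_nonneg n (ne_of_gt habspos), by
      have := Int.emod_lt_of_pos n habspos; omega⟩, ?_⟩
    have hn : n = n % |d| + |d| * (n / |d|) := by
      rw [add_comm]; exact (Int.mul_ediv_add_emod n |d|).symm
    show (φ ^ (n % |d|)) w = (φ ^ n) w
    conv_rhs => rw [hn]
    rw [homeo_zpow_add_apply, hmulabs]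
  have hfin : (Set.range fun n : ℤ => (φ ^ n) w).Finite :=
    Set.Finite.subset ((Set.finite_Icc _ _).image _) hsub
  have hdense := hmin w
  have : (Set.range fun n : ℤ => (φ ^ n) w) = Set.univ := by
    rw [← hfin.isClosed.closure_eq, hdense.closure_eq]
  rw [this] at hfin
  exact Set.infinite_univ hfin

lemma tails_dense {X : Type*} [TopologicalSpace X] [CompactSpace X]
    (φ : X ≃ₜ X) (hmin : IsMinimalHomeo φ) (x : X) (m : ℕ) :
    Dense (Set.range fun n : ℕ => (φ ^ ((m : ℤ) + n)) x) := by
  set T : ℕ → Set X := fun m => Set.range fun n : ℕ => (φ ^ ((m : ℤ) + n)) x with hT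
  set D : ℕ → Set X := fun m => closure (T m) with hD
  have hTsub : ∀ m, T (m + 1) ⊆ T m := by
    rintro m _ ⟨n, rfl⟩
    refine ⟨n + 1, ?_⟩
    congr 1
    push_cast; ring
  have hDsub : ∀ m, D (m + 1) ⊆ D m := fun m => closure_mono (hTsub m)
  have hTne : ∀ m, (T m).Nonempty := fun m => ⟨_, 0, rfl⟩
  have hDcl : ∀ m, IsClosed (D m) := fun m => isClosed_closure
  have hDne : ∀ m, (D m).Nonempty := fun m => (hTne m).mono subset_closure
  have hKne : (⋂ m, D m).Nonempty :=
    IsCompact.nonempty_iInter_of_sequence_nonempty_isCompact_isClosed D hDsub hDne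
      (hDcl 0).isCompact hDcl
  set K := ⋂ m, D m with hK
  have key : ∀ a : ℤ, φ ((φ ^ a) x) = (φ ^ (a + 1)) x := fun a => by
    rw [add_comm, homeo_zpow_add_apply, zpow_one]
  have hpreT : ∀ m, φ.symm ⁻¹' (T m) = T (m + 1) := by
    intro m
    ext y
    simp only [hT, Set.mem_preimage, Set.mem_range]
    constructor
    · rintro ⟨n, hn⟩
      exact ⟨n, by
        rw [show ((m + 1 : ℕ) : ℤ) + (n : ℤ) = ((m : ℤ) + n) + 1 by push_cast; ring, ← key, hn,
          φ.apply_symm_apply]⟩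
    · rintro ⟨n, hn⟩
      refine ⟨n, ?_⟩
      rw [show ((m + 1 : ℕ) : ℤ) + (n : ℤ) = ((m : ℤ) + n) + 1 by push_cast; ring, ← key] at hn
      rw [← hn, φ.symm_apply_apply]
  have hpreD : ∀ m, φ.symm ⁻¹' (D m) = D (m + 1) := by
    intro m
    have := (φ.symm).preimage_closure (T m)
    rw [hD]; simp only []
    rw [this, hpreT]
  have hKinv : φ.symm ⁻¹' K = K := by
    rw [hK, Set.preimage_iInter]
    apply Set.Subset.antisymm
    · intro y hy
      simp only [Set.mem_iInter] at hy ⊢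
      intro m
      have h1 : y ∈ φ.symm ⁻¹' (D m) := hy m
      rw [hpreD m] at h1
      exact hDsub m h1
    · intro y hy
      simp only [Set.mem_iInter] at hy ⊢
      intro m
      rw [hpreD m]
      exact hy (m + 1)
  have hmem : ∀ y, y ∈ K ↔ φ.symm y ∈ K := by
    intro y
    conv_lhs => rw [← hKinv]
    exact Iff.rfl
  have hfwd : ∀ y ∈ K, φ y ∈ K := by
    intro y hy
    rw [hmem (φ y), φ.symm_apply_apply]; exact hy
  obtain ⟨z, hz⟩ := hKne
  have horb : ∀ n : ℤ, (φ ^ n) z ∈ K := by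
    intro n
    induction n using Int.induction_on with
    | zero => rw [homeo_zpow_zero_apply]; exact hz
    | succ k ih =>
        rw [show (k:ℤ) + 1 = 1 + k by ring, homeo_zpow_add_apply, zpow_one]
        exact hfwd _ ih
    | pred k ih =>
        rw [show (-(k:ℤ) - 1) = (-1) + (-k) by ring, homeo_zpow_add_apply, zpow_neg_one,
          homeo_inv_apply]
        exact (hmem _).mp ih
  have hKuniv : K = Set.univ := by
    apply Set.eq_univ_of_univ_subset
    have h1 : Set.range (fun n : ℤ => (φ ^ n) z) ⊆ K := by
      rintro _ ⟨n, rfl⟩; exact horb n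
    have h2 := (hmin z).closure_eq
    calc Set.univ = closure (Set.range fun n : ℤ => (φ ^ n) z) := h2.symm
      _ ⊆ closure K := closure_mono h1
      _ = K := (isClosed_iInter fun m => hDcl m).closure_eq
  have : D m = Set.univ := Set.eq_univ_of_univ_subset (hKuniv ▸ Set.iInter_subset D m)
  rw [hD] at this
  exact dense_iff_closure_eq.mpr this

theorem topFullGroup_LEF' {X : Type*} [TopologicalSpace X] [CompactSpace X] [T2Space X]
    [Infinite X] [Nonempty X]
    (φ : X ≃ₜ X) (hmin : IsMinimalHomeo φ)
    (hsub : ∀ γ : ↥(topFullGroup φ), ∃ f : X → ℤ, Continuous f ∧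
      ∀ y, (γ : X ≃ₜ X) y = (φ ^ f y) y) :
    ∀ F : Finset ↥(topFullGroup φ),
      ∃ (H : Type) (_ : Group H) (_ : Finite H) (α : ↥(topFullGroup φ) → H),
        (∀ γ₁ ∈ F, ∀ γ₂ ∈ F, α (γ₁ * γ₂) = α γ₁ * α γ₂) ∧ Set.InjOn α ↑F := by
  classical
  intro F
  choose f hfc hfx using hsub
  -- cocycle identity
  have hco : ∀ γ₁ γ₂ : ↥(topFullGroup φ), ∀ y : X,
      f (γ₁ * γ₂) y = f γ₁ ((γ₂ : X ≃ₜ X) y) + f γ₂ y := by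
    intro γ₁ γ₂ y
    apply aperiodic_of_minimal φ hmin y
    rw [← hfx (γ₁ * γ₂) y, homeo_zpow_add_apply, ← hfx γ₂ y, ← hfx γ₁ _]
    rfl
  -- the finite set E = F ∪ F·F
  set E : Finset ↥(topFullGroup φ) := F ∪ F * F with hE
  have hFE : ∀ γ ∈ F, γ ∈ E := fun γ h => Finset.mem_union_left _ h
  have hmulE : ∀ γ₁ ∈ F, ∀ γ₂ ∈ F, γ₁ * γ₂ ∈ E := fun γ₁ h1 γ₂ h2 =>
    Finset.mem_union_right _ (Finset.mul_mem_mul h1 h2)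
  -- a uniform bound on cocycles of elements of E
  have hbdd : ∀ γ : ↥(topFullGroup φ), ∃ n : ℕ, ∀ y, (f γ y).natAbs ≤ n := by
    intro γ
    have h := (((IsLocallyConstant.iff_continuous (f γ)).mpr (hfc γ)).range_finite).image
      Int.natAbs
    obtain ⟨n, hn⟩ := h.bddAbove
    exact ⟨n, fun y => hn ⟨f γ y, ⟨y, rfl⟩, rfl⟩⟩
  choose Nf hNf using hbdd
  set N : ℕ := Finset.sup E Nf with hN
  have hNb : ∀ γ ∈ E, ∀ y, (f γ y).natAbs ≤ N := fun γ hγ y =>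
    le_trans (hNf γ y) (Finset.le_sup hγ)
  obtain ⟨x⟩ := (inferInstance : Nonempty X)
  set g : ↥(topFullGroup φ) → ℤ → ℤ := fun γ n => f γ ((φ ^ n) x) with hg
  have hNbz : ∀ γ ∈ E, ∀ n : ℤ, -(N:ℤ) ≤ g γ n ∧ g γ n ≤ N := by
    intro γ hγ n
    have h := hNb γ hγ ((φ ^ n) x)
    have h2 : (g γ n).natAbs ≤ N := h
    omega
  have himg : ∀ (γ : ↥(topFullGroup φ)) (n : ℤ),
      (γ : X ≃ₜ X) ((φ ^ n) x) = (φ ^ (g γ n + n)) x := by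
    intro γ n
    rw [hfx γ, homeo_zpow_add_apply]
  have hreal_inj : ∀ (γ : ↥(topFullGroup φ)) (n n' : ℤ),
      g γ n + n = g γ n' + n' → n = n' := by
    intro γ n n' h
    have h1 : (γ : X ≃ₜ X) ((φ ^ n) x) = (γ : X ≃ₜ X) ((φ ^ n') x) := by
      rw [himg, himg, h]
    exact aperiodic_of_minimal φ hmin x ((γ : X ≃ₜ X).injective h1)
  have hgco : ∀ (γ₁ γ₂ : ↥(topFullGroup φ)) (n : ℤ),
      g (γ₁ * γ₂) n = g γ₁ (g γ₂ n + n) + g γ₂ n := by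
    intro γ₁ γ₂ n
    show f (γ₁ * γ₂) ((φ ^ n) x) = _
    rw [hco γ₁ γ₂, himg γ₂ n]
  -- recurrence to the future
  have hrec : ∀ U : Set X, IsOpen U → U.Nonempty → ∀ m : ℕ,
      ∃ n : ℕ, m ≤ n ∧ (φ ^ (n:ℤ)) x ∈ U := by
    intro U hU hUne m
    obtain ⟨y, hyT, hyU⟩ := (tails_dense φ hmin x m).exists_mem_open hU hUne
    obtain ⟨n, hn⟩ := hyT
    refine ⟨m + n, Nat.le_add_right _ _, ?_⟩
    have hn2 : (φ ^ ((m:ℤ) + (n:ℤ))) x = y := hn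
    have : ((m + n : ℕ) : ℤ) = (m : ℤ) + (n : ℤ) := by push_cast; ring
    rw [this, hn2]
    exact hyU
  -- witnesses distinguishing distinct elements of F
  have hpair : ∀ γ₁ γ₂ : ↥(topFullGroup φ), γ₁ ≠ γ₂ → ∃ n : ℕ, g γ₁ n ≠ g γ₂ n := by
    intro γ₁ γ₂ hne
    have hne2 : ∃ y, f γ₁ y ≠ f γ₂ y := by
      by_contra hall
      push_neg at hall
      exact hne (Subtype.ext (Homeomorph.ext fun y => by rw [hfx γ₁ y, hfx γ₂ y, hall y]))
    have hUo : IsOpen ((fun y => f γ₁ y - f γ₂ y) ⁻¹' {0}ᶜ) :=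
      (((hfc γ₁).sub (hfc γ₂))).isOpen_preimage _ (isOpen_discrete _)
    have hUne : ((fun y => f γ₁ y - f γ₂ y) ⁻¹' {0}ᶜ).Nonempty := by
      obtain ⟨y, hy⟩ := hne2
      exact ⟨y, by simp [sub_eq_zero, hy]⟩
    obtain ⟨n, _, hn⟩ := hrec _ hUo hUne 0
    refine ⟨n, ?_⟩
    have : f γ₁ ((φ ^ (n:ℤ)) x) - f γ₂ ((φ ^ (n:ℤ)) x) ≠ 0 := hn
    intro hc
    rw [hg] at hc
    simp only at hc
    omega
  have hpairL : ∃ L : ℕ, ∀ γ₁ ∈ F, ∀ γ₂ ∈ F, γ₁ ≠ γ₂ →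
      ∃ n : ℕ, n < L ∧ g γ₁ n ≠ g γ₂ n := by
    have hch : ∀ p : ↥(topFullGroup φ) × ↥(topFullGroup φ),
        ∃ n : ℕ, p.1 ≠ p.2 → g p.1 n ≠ g p.2 n := by
      intro p
      by_cases hp : p.1 = p.2
      · exact ⟨0, fun h => absurd hp h⟩
      · obtain ⟨n, hn⟩ := hpair p.1 p.2 hp
        exact ⟨n, fun _ => hn⟩
    choose t ht using hch
    refine ⟨(Finset.sup (F ×ˢ F) t) + 1, fun γ₁ h1 γ₂ h2 hne => ?_⟩
    exact ⟨t (γ₁, γ₂),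
      Nat.lt_succ_of_le (Finset.le_sup (Finset.mem_product.mpr ⟨h1, h2⟩)),
      ht (γ₁, γ₂) hne⟩
  obtain ⟨L, hL⟩ := hpairL
  -- the window set
  set W : Set X := ⋂ γ ∈ E, ⋂ k ∈ Finset.Icc (-(N:ℤ)) (2*N),
      {y | f γ ((φ ^ k) y) = f γ ((φ ^ k) x)} with hW
  have hWo : IsOpen W := by
    rw [hW]
    refine isOpen_biInter_finset fun γ _ => isOpen_biInter_finset fun k _ => ?_
    have hc : Continuous fun y => f γ ((φ ^ k) y) := (hfc γ).comp (φ ^ k).continuous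
    exact hc.isOpen_preimage {f γ ((φ ^ k) x)} (isOpen_discrete _)
  have hxW : x ∈ W := by
    rw [hW]
    simp only [Set.mem_iInter]
    intro γ _ k _
    exact rfl
  obtain ⟨M, hML, hMW⟩ := hrec W hWo ⟨x, hxW⟩ (max L (2*N+1))
  have hM1 : 2*N+1 ≤ M := le_trans (le_max_right _ _) hML
  have hMLle : L ≤ M := le_trans (le_max_left _ _) hML
  haveI : NeZero M := ⟨by omega⟩
  have hMzpos : (0:ℤ) < (M:ℤ) := by exact_mod_cast Nat.pos_of_ne_zero (by omega)
  have hM1z : 2*(N:ℤ)+1 ≤ (M:ℤ) := by exact_mod_cast hM1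
  -- window property along the orbit
  have hwin : ∀ γ ∈ E, ∀ k : ℤ, -(N:ℤ) ≤ k → k ≤ 2*N → g γ ((M:ℤ) + k) = g γ k := by
    intro γ hγ k hk1 hk2
    have h1 := hMW
    rw [hW] at h1
    simp only [Set.mem_iInter] at h1
    have h2 := h1 γ hγ k (Finset.mem_Icc.mpr ⟨hk1, hk2⟩)
    show f γ ((φ ^ ((M:ℤ) + k)) x) = f γ ((φ ^ k) x)
    rw [add_comm, homeo_zpow_add_apply]
    exact h2
  -- the approximating maps on ZMod M
  set u : ↥(topFullGroup φ) → ZMod M → ZMod M :=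
    fun γ z => z + (((g γ ((z.val : ℤ))) : ℤ) : ZMod M) with hu
  have hcastval : ∀ z : ZMod M, (((z.val : ℤ)) : ZMod M) = z := fun z => by
    push_cast
    simp [ZMod.natCast_val, ZMod.cast_id]
  have huval : ∀ γ z, u γ z = ((((z.val : ℤ)) + g γ ((z.val : ℤ)) : ℤ) : ZMod M) := by
    intro γ z
    have h5 : ((((z.val : ℤ)) + g γ ((z.val : ℤ)) : ℤ) : ZMod M)
        = ((((z.val : ℤ)) : ℤ) : ZMod M) + (((g γ ((z.val : ℤ))) : ℤ) : ZMod M) := by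
      push_cast
      ring
    rw [h5, hcastval z]
  have hvlt : ∀ z : ZMod M, (z.val : ℤ) < M := fun z => by exact_mod_cast ZMod.val_lt z
  have hvnn : ∀ z : ZMod M, (0:ℤ) ≤ (z.val : ℤ) := fun z => Int.ofNat_nonneg _
  -- injectivity of u γ for γ ∈ E
  have hinj : ∀ γ ∈ E, Function.Injective (u γ) := by
    intro γ hγ z z' hzz
    rw [huval, huval] at hzz
    set n : ℤ := (z.val : ℤ) with hn
    set n' : ℤ := (z'.val : ℤ) with hn'
    have hcong : (n + g γ n) ≡ (n' + g γ n') [ZMOD (M:ℕ)] :=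
      (ZMod.intCast_eq_intCast_iff _ _ _).mp hzz
    have hdvd : ((M:ℕ):ℤ) ∣ (n' + g γ n') - (n + g γ n) := hcong.dvd
    obtain ⟨q, hq⟩ := hdvd
    have hb1 := hNbz γ hγ n
    have hb2 := hNbz γ hγ n'
    have h1 := hvlt z
    have h2 := hvlt z'
    have h3 := hvnn z
    have h4 := hvnn z'
    have hqb : -1 ≤ q ∧ q ≤ 1 := by
      rcases lt_trichotomy q (-1) with hq2 | hq2 | hq2
      · exfalso
        have : (M:ℤ) * q ≤ (M:ℤ) * (-2) := by nlinarith
        omega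
      · omega
      · rcases lt_trichotomy q 1 with hq3 | hq3 | hq3
        · omega
        · omega
        · exfalso
          have : (M:ℤ) * 2 ≤ (M:ℤ) * q := by nlinarith
          omega
    have hzz' : n = n' → z = z' := by
      intro h
      rw [← hcastval z, ← hcastval z', ← hn, ← hn', h]
    rcases hqb with ⟨hql, hqr⟩
    interval_cases q
    · -- n + g n = n' + g n' + M ; then n' ≤ 2N-1, real injectivity gives contradiction
      exfalso
      have hkey : g γ ((M:ℤ) + n') = g γ n' := hwin γ hγ n' (by omega) (by omega)
      have : g γ ((M:ℤ) + n') + ((M:ℤ) + n') = g γ n + n := by omega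
      have := hreal_inj γ _ _ this
      omega
    · apply hzz'
      apply hreal_inj γ n n'
      omega
    · exfalso
      have hkey : g γ ((M:ℤ) + n) = g γ n := hwin γ hγ n (by omega) (by omega)
      have : g γ ((M:ℤ) + n) + ((M:ℤ) + n) = g γ n' + n' := by omega
      have := hreal_inj γ _ _ this
      omega
  have hbij : ∀ γ ∈ E, Function.Bijective (u γ) := fun γ hγ =>
    Finite.injective_iff_bijective.mp (hinj γ hγ)
  set α : ↥(topFullGroup φ) → Equiv.Perm (ZMod M) :=
    fun γ => if h : γ ∈ E then Equiv.ofBijective (u γ) (hbij γ h) else 1 with hα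
  have hαapp : ∀ γ (h : γ ∈ E) (z : ZMod M), α γ z = u γ z := by
    intro γ h z
    rw [hα]
    simp only [dif_pos h]
    rfl
  refine ⟨Equiv.Perm (ZMod M), inferInstance, inferInstance, α, ?_, ?_⟩
  · -- multiplicativity
    intro γ₁ h1 γ₂ h2
    apply Equiv.ext
    intro z
    rw [Equiv.Perm.mul_apply, hαapp _ (hmulE γ₁ h1 γ₂ h2), hαapp _ (hFE γ₂ h2),
      hαapp _ (hFE γ₁ h1), huval, huval]
    set n : ℤ := (z.val : ℤ) with hn
    set m : ℤ := g γ₂ n + n with hm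
    have hvm : ((((n + g γ₂ n : ℤ) : ZMod M)).val : ℤ) = m % (M:ℤ) := by
      rw [ZMod.val_intCast]
      congr 1
      omega
    rw [huval]
    rw [hvm]
    have hb2 := hNbz γ₂ (hFE γ₂ h2) n
    have h3 := hvnn z
    have h1z := hvlt z
    -- g γ₁ (m % M) = g γ₁ m
    have hgv : g γ₁ (m % (M:ℤ)) = g γ₁ m := by
      rcases lt_trichotomy m 0 with hc | hc | hc
      · have h6 : (m + (M:ℤ) * 1) % (M:ℤ) = m % M := Int.add_mul_emod_self_left _ _ _ ..
        have hmM : m % (M:ℤ) = m + M := by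
          rw [← h6, mul_one, Int.emod_eq_of_lt (by omega) (by omega)]
        rw [hmM]
        have := hwin γ₁ (hFE γ₁ h1) m (by omega) (by omega)
        rw [← this]
        congr 1
        ring
      · rw [hc]
        simp
      · rcases lt_or_ge m (M:ℤ) with hc2 | hc2
        · rw [Int.emod_eq_of_lt (by omega) hc2]
        · have h6 : ((m - (M:ℤ)) + (M:ℤ) * 1) % (M:ℤ) = (m - M) % M :=
            Int.add_mul_emod_self_left _ _ _
          have hmM : m % (M:ℤ) = m - M := by
            have h7 : m - (M:ℤ) + (M:ℤ) * 1 = m := by ring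
            rw [h7] at h6
            rw [h6, Int.emod_eq_of_lt (by omega) (by omega)]
          rw [hmM]
          have := hwin γ₁ (hFE γ₁ h1) (m - M) (by omega) (by omega)
          rw [← this]
          congr 1
          ring
    rw [hgv]
    have hmod2 : (m % (M:ℤ) + g γ₁ m) ≡ (m + g γ₁ m) [ZMOD (M:ℕ)] := by
      apply Int.ModEq.add_right
      show (m % (M:ℤ)) % ((M:ℕ):ℤ) = m % ((M:ℕ):ℤ)
      push_cast
      exact Int.emod_emod_of_dvd m dvd_rfl
    have := (ZMod.intCast_eq_intCast_iff _ _ _).mpr hmod2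
    rw [this]
    congr 1
    rw [hgco]
    rw [← hm]
    ring
  · -- injectivity on F
    intro γ₁ h1 γ₂ h2 heq
    by_contra hne
    have h1F : γ₁ ∈ F := h1
    have h2F : γ₂ ∈ F := h2
    obtain ⟨n, hnL, hgne⟩ := hL γ₁ h1F γ₂ h2F hne
    have hnM : n < M := lt_of_lt_of_le hnL hMLle
    set z : ZMod M := ((n : ℕ) : ZMod M) with hz
    have hzval : (z.val : ℤ) = (n : ℤ) := by
      rw [hz, ZMod.val_natCast_of_lt hnM]
    have happ : α γ₁ z = α γ₂ z := by rw [heq]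
    rw [hαapp _ (hFE γ₁ h1F), hαapp _ (hFE γ₂ h2F), huval, huval, hzval] at happ
    have hcong := (ZMod.intCast_eq_intCast_iff _ _ _).mp happ
    have hdvd : ((M:ℕ):ℤ) ∣ ((n:ℤ) + g γ₂ (n:ℤ)) - ((n:ℤ) + g γ₁ (n:ℤ)) := hcong.dvd
    have hb1 := hNbz γ₁ (hFE γ₁ h1F) (n:ℤ)
    have hb2 := hNbz γ₂ (hFE γ₂ h2F) (n:ℤ)
    have hne0 : ((n:ℤ) + g γ₂ (n:ℤ)) - ((n:ℤ) + g γ₁ (n:ℤ)) ≠ 0 := by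
      intro hc
      exact hgne (by omega)
    have hle := Int.le_of_dvd (abs_pos.mpr hne0) ((dvd_abs _ _).mpr hdvd)
    have habs : |((n:ℤ) + g γ₂ (n:ℤ)) - ((n:ℤ) + g γ₁ (n:ℤ))| ≤ 2*(N:ℤ) :=
      abs_le.mpr ⟨by omega, by omega⟩
    push_cast at hle
    omega

/-- Grigorchuk–Medynets. The topological full group of a minimal Cantor
system is LEF: every finite subset admits a multiplicative injection into a finite group. -/
theorem topFullGroup_LEF {X : Type*} [TopologicalSpace X]
    (hX : IsCantorSpace X) (φ : X ≃ₜ X) (hmin : IsMinimalHomeo φ) :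
    ∀ F : Finset ↥(topFullGroup φ),
      ∃ (H : Type) (_ : Group H) (_ : Finite H) (α : ↥(topFullGroup φ) → H),
        (∀ γ₁ ∈ F, ∀ γ₂ ∈ F, α (γ₁ * γ₂) = α γ₁ * α γ₂) ∧ Set.InjOn α ↑F := by
  intro F
  obtain ⟨e⟩ := hX
  haveI : CompactSpace X := e.symm.compactSpace
  haveI : T2Space X := e.symm.t2Space
  haveI : Infinite X :=
    Infinite.of_injective (fun n : ℕ => e.symm (fun m => decide (m = n)))
      (by
        intro a b hab
        have := congrArg e hab
        simp only [Homeomorph.apply_symm_apply] at this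
        have h2 := congrFun this a
        simpa using h2.symm)
  haveI : Nonempty X := ⟨e.symm fun _ => false⟩
  exact topFullGroup_LEF' φ hmin (fun γ => γ.2) F
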